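/- For γ > 1 let ω(k) = k·√(γ + 1/(1+k²)) and fix j ∈ {−1,1}. Then for every M > 0 there exists C > 0 such that for all k, ℓ with |k − ℓ| ≤ M and |k| ≥ 2M+1, the denominator satisfies |j(ω(k) − ω(ℓ)) + ω(k−ℓ)| = |√γ·j·(k−ℓ) + ω(k−ℓ)| + error, with error bounded by C·|k|⁻¹; moreover √γ·j·m + ω(m) = 0 only at m = 0 and |√γ·j·m + ω(m)| ≥ c·|m| for |m| ≤ M with c > 0. -/

import Mathlib

open Real

/-- key square-root difference bound. -/
lemma my_sqrt_diff_le (γ ε : ℝ) (hγ : 1 < γ) (hε : 0 < ε) :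
    Real.sqrt (γ + ε) - Real.sqrt γ ≤ ε / 2 := by
  have ht0 : (1:ℝ) ≤ Real.sqrt γ := by
    rw [show (1:ℝ) = Real.sqrt 1 by simp]
    exact Real.sqrt_le_sqrt (by linarith)
  set s := Real.sqrt (γ + ε) with hs
  set t := Real.sqrt γ with htd
  have hs2 : s ^ 2 = γ + ε := Real.sq_sqrt (by linarith)
  have ht2 : t ^ 2 = γ := Real.sq_sqrt (by linarith)
  have hst : t ≤ s := Real.sqrt_le_sqrt (by linarith)
  have h2t : (2:ℝ) ≤ s + t := by linarith
  nlinarith [hs2, ht2, hst, h2t]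

lemma my_hbound (γ : ℝ) (hγ : 1 < γ) (k : ℝ) (hk : k ≠ 0) :
    |k * Real.sqrt (γ + 1 / (1 + k ^ 2)) - Real.sqrt γ * k| ≤ 1 / (2 * |k|) := by
  have hk2 : (0:ℝ) < 1 + k ^ 2 := by positivity
  have hε : (0:ℝ) < 1 / (1 + k ^ 2) := by positivity
  have hdiff := my_sqrt_diff_le γ (1 / (1 + k ^ 2)) hγ hε
  have hnn : Real.sqrt γ ≤ Real.sqrt (γ + 1 / (1 + k ^ 2)) :=
    Real.sqrt_le_sqrt (by linarith)
  have hk0 : (0:ℝ) < |k| := abs_pos.mpr hk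
  have heq : k * Real.sqrt (γ + 1 / (1 + k ^ 2)) - Real.sqrt γ * k
      = k * (Real.sqrt (γ + 1 / (1 + k ^ 2)) - Real.sqrt γ) := by ring
  rw [heq, abs_mul, abs_of_nonneg (show (0:ℝ) ≤ Real.sqrt (γ + 1 / (1 + k ^ 2)) - Real.sqrt γ by linarith)]
  have h1 : |k| * (Real.sqrt (γ + 1 / (1 + k ^ 2)) - Real.sqrt γ)
      ≤ |k| * (1 / (1 + k ^ 2) / 2) := by
    exact mul_le_mul_of_nonneg_left hdiff (le_of_lt hk0)
  refine h1.trans ?_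
  have key : |k| * (1 / (1 + k ^ 2) / 2) = |k| / (2 * (1 + k ^ 2)) := by field_simp
  rw [key, div_le_div_iff₀ (by positivity) (by positivity)]
  have habs : |k| * |k| = k ^ 2 := by rw [← abs_mul, abs_of_nonneg (mul_self_nonneg k)]; ring
  nlinarith [habs, hk0]

theorem stmt18 (γ : ℝ) (hγ : 1 < γ) (j : ℝ) (hj : j = -1 ∨ j = 1) :
    (∀ M > (0:ℝ), ∃ C > (0:ℝ), ∀ k ℓ : ℝ, |k - ℓ| ≤ M → 2 * M + 1 ≤ |k| →
      abs (|j * (k * Real.sqrt (γ + 1 / (1 + k ^ 2)) -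
              ℓ * Real.sqrt (γ + 1 / (1 + ℓ ^ 2))) +
          (k - ℓ) * Real.sqrt (γ + 1 / (1 + (k - ℓ) ^ 2))| -
        |Real.sqrt γ * j * (k - ℓ) +
          (k - ℓ) * Real.sqrt (γ + 1 / (1 + (k - ℓ) ^ 2))|) ≤ C / |k|) ∧
    (∀ m : ℝ,
      Real.sqrt γ * j * m + m * Real.sqrt (γ + 1 / (1 + m ^ 2)) = 0 → m = 0) ∧
    (∀ M > (0:ℝ), ∃ c > (0:ℝ), ∀ m : ℝ, |m| ≤ M →
      c * |m| ≤ |Real.sqrt γ * j * m + m * Real.sqrt (γ + 1 / (1 + m ^ 2))|) := by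
  have hγ0 : (0:ℝ) < γ := by linarith
  have hsγ1 : (1:ℝ) ≤ Real.sqrt γ := by
    rw [show (1:ℝ) = Real.sqrt 1 by simp]
    exact Real.sqrt_le_sqrt (by linarith)
  have hj1 : |j| = 1 := by rcases hj with h | h <;> simp [h]
  refine ⟨?_, ?_, ?_⟩
  · -- part 1
    intro M hM
    refine ⟨2, by norm_num, fun k ℓ hkl hk => ?_⟩
    have hk0 : (0:ℝ) < |k| := by linarith
    have hkne : k ≠ 0 := by
      intro h; rw [h] at hk0; simp at hk0
    have hl : (|k| + 1) / 2 ≤ |ℓ| := by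
      have := abs_sub_abs_le_abs_sub k ℓ
      linarith
    have hl0 : (0:ℝ) < |ℓ| := by linarith
    have hlne : ℓ ≠ 0 := by
      intro h; rw [h] at hl0; simp at hl0
    have hbk := my_hbound γ hγ k hkne
    have hbl := my_hbound γ hγ ℓ hlne
    set ω := fun x : ℝ => x * Real.sqrt (γ + 1 / (1 + x ^ 2)) with hω
    have key : |j * (ω k - ω ℓ) + ω (k - ℓ) - (Real.sqrt γ * j * (k - ℓ) + ω (k - ℓ))|
        ≤ 2 / |k| := by
      have heq : j * (ω k - ω ℓ) + ω (k - ℓ) - (Real.sqrt γ * j * (k - ℓ) + ω (k - ℓ))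
          = j * ((ω k - Real.sqrt γ * k) - (ω ℓ - Real.sqrt γ * ℓ)) := by
        simp only [hω]; ring
      rw [heq, abs_mul, hj1, one_mul]
      have h1 : |(ω k - Real.sqrt γ * k) - (ω ℓ - Real.sqrt γ * ℓ)|
          ≤ 1 / (2 * |k|) + 1 / (2 * |ℓ|) := by
        calc |(ω k - Real.sqrt γ * k) - (ω ℓ - Real.sqrt γ * ℓ)|
            ≤ |ω k - Real.sqrt γ * k| + |ω ℓ - Real.sqrt γ * ℓ| := abs_sub _ _
          _ ≤ 1 / (2 * |k|) + 1 / (2 * |ℓ|) := add_le_add hbk hbl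
      refine h1.trans ?_
      have h2 : 1 / (2 * |ℓ|) ≤ 1 / (|k| + 1) := by
        apply one_div_le_one_div_of_le (by linarith)
        linarith
      have h3 : 1 / (|k| + 1) ≤ 1 / |k| := by
        apply one_div_le_one_div_of_le hk0; linarith
      have h4 : 1 / (2 * |k|) ≤ 1 / |k| := by
        apply one_div_le_one_div_of_le hk0; linarith
      have : 2 / |k| = 1 / |k| + 1 / |k| := by ring
      linarith
    calc abs (|j * (ω k - ω ℓ) + ω (k - ℓ)| - |Real.sqrt γ * j * (k - ℓ) + ω (k - ℓ)|)
        ≤ |j * (ω k - ω ℓ) + ω (k - ℓ) - (Real.sqrt γ * j * (k - ℓ) + ω (k - ℓ))| :=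
          abs_abs_sub_abs_le_abs_sub _ _
      _ ≤ 2 / |k| := key
  · -- part 2
    intro m hm
    by_contra hm0
    have hε : (0:ℝ) < 1 / (1 + m ^ 2) := by positivity
    have hlt : Real.sqrt γ < Real.sqrt (γ + 1 / (1 + m ^ 2)) := by
      apply Real.sqrt_lt_sqrt (le_of_lt hγ0); linarith
    have hfac : 0 < Real.sqrt γ * j + Real.sqrt (γ + 1 / (1 + m ^ 2)) := by
      rcases hj with h | h <;> rw [h] <;> nlinarith [Real.sqrt_nonneg γ]
    have : m * (Real.sqrt γ * j + Real.sqrt (γ + 1 / (1 + m ^ 2))) = 0 := by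
      rw [← hm]; ring
    rcases mul_eq_zero.mp this with h | h
    · exact hm0 h
    · linarith
  · -- part 3
    intro M hM
    have hεM : (0:ℝ) < 1 / (1 + M ^ 2) := by positivity
    have hltM : Real.sqrt γ < Real.sqrt (γ + 1 / (1 + M ^ 2)) := by
      apply Real.sqrt_lt_sqrt (le_of_lt hγ0); linarith
    refine ⟨min (Real.sqrt γ) (Real.sqrt (γ + 1 / (1 + M ^ 2)) - Real.sqrt γ),
      lt_min (by linarith) (by linarith), fun m hm => ?_⟩
    have hm2 : m ^ 2 ≤ M ^ 2 := by
      have := sq_abs m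
      nlinarith [abs_nonneg m]
    have hmono : Real.sqrt (γ + 1 / (1 + M ^ 2)) ≤ Real.sqrt (γ + 1 / (1 + m ^ 2)) := by
      apply Real.sqrt_le_sqrt
      have h1 : (0:ℝ) < 1 + m ^ 2 := by positivity
      have h2 : (0:ℝ) < 1 + M ^ 2 := by positivity
      have : 1 / (1 + M ^ 2) ≤ 1 / (1 + m ^ 2) := by
        apply one_div_le_one_div_of_le h1; linarith
      linarith
    have hfac : min (Real.sqrt γ) (Real.sqrt (γ + 1 / (1 + M ^ 2)) - Real.sqrt γ)
        ≤ Real.sqrt γ * j + Real.sqrt (γ + 1 / (1 + m ^ 2)) := by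
      rcases hj with h | h
      · rw [h]
        calc min (Real.sqrt γ) (Real.sqrt (γ + 1 / (1 + M ^ 2)) - Real.sqrt γ)
            ≤ Real.sqrt (γ + 1 / (1 + M ^ 2)) - Real.sqrt γ := min_le_right _ _
          _ ≤ Real.sqrt γ * (-1) + Real.sqrt (γ + 1 / (1 + m ^ 2)) := by linarith
      · rw [h]
        calc min (Real.sqrt γ) (Real.sqrt (γ + 1 / (1 + M ^ 2)) - Real.sqrt γ)
            ≤ Real.sqrt γ := min_le_left _ _
          _ ≤ Real.sqrt γ * 1 + Real.sqrt (γ + 1 / (1 + m ^ 2)) := by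
            nlinarith [Real.sqrt_nonneg (γ + 1 / (1 + m ^ 2))]
    have heq : Real.sqrt γ * j * m + m * Real.sqrt (γ + 1 / (1 + m ^ 2))
        = m * (Real.sqrt γ * j + Real.sqrt (γ + 1 / (1 + m ^ 2))) := by ring
    rw [heq, abs_mul]
    have hfnn : 0 ≤ Real.sqrt γ * j + Real.sqrt (γ + 1 / (1 + m ^ 2)) := by
      refine le_trans ?_ hfac
      exact le_min (Real.sqrt_nonneg _) (by linarith)
    rw [abs_of_nonneg hfnn]
    rw [mul_comm]
    exact mul_le_mul_of_nonneg_left hfac (abs_nonneg m)
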